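/- Fix an integer k ≥ 3 and let c = 2^{-13}. For all sufficiently large n, the total number f(n,C_k) of labelled C_k-free oriented graphs on [n] satisfies f(n,C_k) ≥ 2^{c·n} · |F_0| ≥ 2^{C(n,2) + c·n}, where F_0 is the set of acyclic oriented graphs on [n]. -/

import Mathlib

open scoped Classical

/-- An arc set on `Fin n`: a digraph on vertex set `[n]` is identified with its
finite set of arcs. -/
abbrev ArcSet (n : ℕ) := Finset (Fin n × Fin n)

/-- A digraph is loopless. -/
def IsLoopless {n : ℕ} (E : ArcSet n) : Prop := ∀ v : Fin n, (v, v) ∉ E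

/-- An oriented graph: loopless and at most one of the arcs `(u,v)`, `(v,u)`
is present for each pair. -/
def IsOriented {n : ℕ} (E : ArcSet n) : Prop :=
  IsLoopless E ∧ ∀ u v : Fin n, (u, v) ∈ E → (v, u) ∉ E

/-- `E` contains a (not necessarily induced) copy of the directed cycle `C_k`. -/
def ContainsCycle {n : ℕ} (k : ℕ) (E : ArcSet n) : Prop :=
  ∃ f : ZMod k → Fin n, Function.Injective f ∧ ∀ i : ZMod k, (f i, f (i + 1)) ∈ E

/-- `E` is `C_k`-free. -/
def CkFree {n : ℕ} (k : ℕ) (E : ArcSet n) : Prop := ¬ ContainsCycle k E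

/-- The number of backwards arcs of `E` with respect to the ordering `σ`:
arcs `(u,v)` with `σ u > σ v`. -/
def backCount {n : ℕ} (E : ArcSet n) (σ : Equiv.Perm (Fin n)) : ℕ :=
  (E.filter fun e => σ e.2 < σ e.1).card

/-- `b(E)`: the minimum number of backwards arcs over all orderings, i.e. the
number of backwards arcs in a transitive-optimal ordering. -/
noncomputable def bMin {n : ℕ} (E : ArcSet n) : ℕ :=
  Finset.univ.inf' Finset.univ_nonempty (backCount E)

/-- `E` is acyclic: it contains no directed cycle of any positive length. -/
def IsAcyclic {n : ℕ} (E : ArcSet n) : Prop :=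
  ∀ l : ℕ, 0 < l → ¬ ContainsCycle l E

/-- `F_0(n)`: the set of labelled acyclic oriented graphs on `[n]`. -/
noncomputable def F0 (n : ℕ) : Finset (ArcSet n) :=
  Finset.univ.filter fun E => IsOriented E ∧ IsAcyclic E

/-- The number of labelled `C_k`-free oriented graphs on `[n]`. -/
noncomputable def fnk (n k : ℕ) : ℕ :=
  (Finset.univ.filter fun E : ArcSet n => IsOriented E ∧ CkFree k E).card

set_option maxHeartbeats 1000000
namespace CkProof

open Finset

variable {n : ℕ}

lemma mem_F0 {E : ArcSet n} : E ∈ F0 n ↔ IsOriented E ∧ IsAcyclic E := by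
  simp [F0]

/-- Counting pairs `(a,b)` with `a < b` in `S × S`. -/
lemma card_ltPairs {α : Type*} [LinearOrder α] [DecidableEq α] (S : Finset α) :
    ((S ×ˢ S).filter fun p => p.1 < p.2).card = S.card.choose 2 := by
  classical
  set A := (S ×ˢ S).filter fun p => p.1 < p.2 with hA
  set B := (S ×ˢ S).filter fun p => p.2 < p.1 with hB
  have hAB : A.card = B.card := by
    apply Finset.card_nbij' (fun p => (p.2, p.1)) (fun p => (p.2, p.1))
    · intro p hp
      simp only [hA, hB, Finset.mem_coe, mem_filter, mem_product] at hp ⊢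
      exact ⟨⟨hp.1.2, hp.1.1⟩, hp.2⟩
    · intro p hp
      simp only [hA, hB, Finset.mem_coe, mem_filter, mem_product] at hp ⊢
      exact ⟨⟨hp.1.2, hp.1.1⟩, hp.2⟩
    · intro p _; rfl
    · intro p _; rfl
  have hsplit : A.card + ((S ×ˢ S).filter fun p => ¬ p.1 < p.2).card = (S ×ˢ S).card :=
    Finset.card_filter_add_card_filter_not _
  have hsplit2 : (((S ×ˢ S).filter fun p => ¬ p.1 < p.2).filter fun p => p.2 < p.1).card
      + (((S ×ˢ S).filter fun p => ¬ p.1 < p.2).filter fun p => ¬ p.2 < p.1).card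
      = ((S ×ˢ S).filter fun p => ¬ p.1 < p.2).card :=
    Finset.card_filter_add_card_filter_not _
  have h1 : ((S ×ˢ S).filter fun p => ¬ p.1 < p.2).filter (fun p => p.2 < p.1) = B := by
    rw [Finset.filter_filter]
    apply Finset.filter_congr
    intro p _
    constructor
    · rintro ⟨-, h⟩; exact h
    · intro h; exact ⟨not_lt.mpr h.le, h⟩
  have h2 : (((S ×ˢ S).filter fun p => ¬ p.1 < p.2).filter fun p => ¬ p.2 < p.1).card
      = S.card := by
    apply Finset.card_nbij' (fun p => p.1) (fun a => (a, a))
    · intro p hp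
      simp only [Finset.mem_coe, mem_filter, mem_product] at hp
      exact hp.1.1.1
    · intro a ha
      simp only [Finset.mem_coe, mem_filter, mem_product]
      exact ⟨⟨⟨ha, ha⟩, lt_irrefl _⟩, lt_irrefl _⟩
    · intro p hp
      simp only [Finset.mem_coe, mem_filter, mem_product, not_lt] at hp
      exact Prod.ext rfl (le_antisymm hp.1.2 hp.2).symm
    · intro a _; rfl
  have hprod : (S ×ˢ S).card = S.card * S.card := Finset.card_product _ _
  rw [h1] at hsplit2
  have key : A.card + A.card + S.card = S.card * S.card := by omega
  rw [Nat.choose_two_right]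
  have h3 : S.card * (S.card - 1) = S.card * S.card - S.card := by
    cases hc : S.card with
    | zero => simp
    | succ c => rw [Nat.succ_sub_one, Nat.mul_succ]; omega
  rw [h3]
  omega

/-- A closed walk yields an (injective) directed cycle. -/
lemma cycle_of_walk (E : ArcSet n)
    (h : ∃ t, 0 < t ∧ ∃ f : ℕ → Fin n, f t = f 0 ∧ ∀ i < t, (f i, f (i+1)) ∈ E) :
    ∃ l, 0 < l ∧ ContainsCycle l E := by
  classical
  obtain ⟨ht₀, f, hf0, harc⟩ := Nat.find_spec h
  set t₀ := Nat.find h with ht₀def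
  refine ⟨t₀, ht₀, ?_⟩
  haveI : NeZero t₀ := ⟨ht₀.ne'⟩
  have hinj : ∀ a b : ℕ, a < b → b < t₀ → f a ≠ f b := by
    intro a b hab hbt hfab
    have hshort : 0 < b - a ∧ ∃ g : ℕ → Fin n, g (b - a) = g 0 ∧
        ∀ i < b - a, (g i, g (i+1)) ∈ E := by
      refine ⟨by omega, fun i => f (a + i), ?_, ?_⟩
      · simp only [Nat.add_sub_cancel' hab.le, Nat.add_zero]
        exact hfab.symm
      · intro i hi
        have hlt : a + i < t₀ := by omega
        have := harc (a + i) hlt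
        simpa [Nat.add_assoc] using this
    have hfind : t₀ ≤ b - a := Nat.find_le hshort
    omega
  have hval : ∀ i : ZMod t₀, (i + 1).val = (i.val + 1) % t₀ := by
    intro i
    rw [ZMod.val_add, ZMod.val_one_eq_one_mod, Nat.add_mod_mod]
  refine ⟨fun i => f i.val, ?_, ?_⟩
  · intro a b hab
    by_contra hne
    rcases Nat.lt_trichotomy a.val b.val with h' | h' | h'
    · exact hinj a.val b.val h' (ZMod.val_lt b) hab
    · exact hne (ZMod.val_injective t₀ h')
    · exact hinj b.val a.val h' (ZMod.val_lt a) hab.symm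
  · intro i
    show (f i.val, f (i + 1).val) ∈ E
    rcases Nat.lt_or_ge (i.val + 1) t₀ with hlt | hge
    · rw [hval, Nat.mod_eq_of_lt hlt]
      exact harc i.val (by omega)
    · have hit : i.val = t₀ - 1 := by have := ZMod.val_lt i; omega
      have hvz : (i + 1).val = 0 := by
        rw [hval, hit, show t₀ - 1 + 1 = t₀ by omega, Nat.mod_self]
      rw [hvz, hit]
      have := harc (t₀ - 1) (by omega)
      rwa [show t₀ - 1 + 1 = t₀ by omega, hf0] at this

lemma acyclic_of_increasing (E : ArcSet n) (pos : Fin n → ℕ)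
    (h : ∀ e ∈ E, pos e.1 < pos e.2) : IsAcyclic E := by
  rintro l hl ⟨f, hinj, harc⟩
  haveI : NeZero l := ⟨hl.ne'⟩
  obtain ⟨i, -, hmax⟩ := Finset.exists_max_image Finset.univ (fun i => pos (f i))
    Finset.univ_nonempty
  exact absurd (h _ (harc i)) (not_lt.mpr (hmax (i + 1) (Finset.mem_univ _)))

/-- Every acyclic digraph has a topological ordering. -/
lemma exists_topo (E : ArcSet n) (hE : IsAcyclic E) :
    ∃ σ : Equiv.Perm (Fin n), ∀ e ∈ E, σ e.1 < σ e.2 := by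
  classical
  set r : Fin n → Fin n → Prop := fun u v => (u, v) ∈ E with hr
  have walk : ∀ u w, Relation.TransGen r u w →
      ∃ t, ∃ f : ℕ → Fin n, 0 < t ∧ f 0 = u ∧ f t = w ∧ ∀ i < t, (f i, f (i+1)) ∈ E := by
    intro u w h
    induction h with
    | single hrel =>
      rename_i b
      refine ⟨1, fun i => if i = 0 then u else b, one_pos, by simp, by simp, ?_⟩
      intro i hi
      have : i = 0 := by omega
      subst this
      simpa using hrel
    | tail h₁ h₂ ih =>
      rename_i b c
      obtain ⟨t, f, ht, h0, htb, harc⟩ := ih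
      refine ⟨t + 1, fun i => if i ≤ t then f i else c, by omega,
        by simp [h0], by show (if t + 1 ≤ t then f (t+1) else c) = c; rw [if_neg (by omega)], ?_⟩
      intro i hi
      rcases Nat.lt_or_ge i t with h' | h'
      · simp only [if_pos h'.le, if_pos (by omega : i + 1 ≤ t)]
        exact harc i h'
      · have : i = t := by omega
        subst this
        simp only [if_pos le_rfl, if_neg (by omega : ¬ i + 1 ≤ i), htb]
        exact h₂
  have hirr : ∀ v, ¬ Relation.TransGen r v v := by
    intro v hv
    obtain ⟨t, f, ht, h0, htv, harc⟩ := walk v v hv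
    have : ∃ t, 0 < t ∧ ∃ f : ℕ → Fin n, f t = f 0 ∧ ∀ i < t, (f i, f (i+1)) ∈ E :=
      ⟨t, ht, f, by rw [h0, htv], harc⟩
    obtain ⟨l, hl, hc⟩ := cycle_of_walk E this
    exact hE l hl hc
  set h : Fin n → ℕ := fun v => (Finset.univ.filter fun u => Relation.TransGen r u v).card
    with hh
  have hmono : ∀ e ∈ E, h e.1 < h e.2 := by
    intro e he
    apply Finset.card_lt_card
    constructor
    · intro x hx
      simp only [hh, Finset.mem_filter] at hx ⊢
      exact ⟨hx.1, hx.2.tail he⟩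
    · intro hsub
      have h1 : e.1 ∈ Finset.univ.filter fun u => Relation.TransGen r u e.2 := by
        simp only [Finset.mem_filter]
        exact ⟨Finset.mem_univ _, Relation.TransGen.single he⟩
      have h2 := hsub h1
      simp only [Finset.mem_filter] at h2
      exact hirr e.1 h2.2
  set key : Fin n → ℕ := fun v => h v * n + v.val with hkey
  have hkeymono : ∀ u v : Fin n, h u < h v → key u < key v := by
    intro u v huv
    have : key u < (h u + 1) * n := by
      simp only [hkey, Nat.add_mul, Nat.one_mul]
      have := u.isLt
      omega
    calc key u < (h u + 1) * n := this
      _ ≤ h v * n := Nat.mul_le_mul_right n huv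
      _ ≤ key v := Nat.le_add_right _ _
  have hkeyinj : Function.Injective key := by
    intro u v huv
    rcases Nat.lt_trichotomy (h u) (h v) with h' | h' | h'
    · exact absurd huv (Nat.ne_of_lt (hkeymono u v h'))
    · have : u.val = v.val := by simp only [hkey, h'] at huv; omega
      exact Fin.ext this
    · exact absurd huv.symm (Nat.ne_of_lt (hkeymono v u h'))
  set s : Finset ℕ := Finset.univ.image key with hs
  have hscard : s.card = n := by
    rw [hs, Finset.card_image_of_injective _ hkeyinj, Finset.card_univ, Fintype.card_fin]
  set e := s.orderIsoOfFin hscard with he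
  set σfun : Fin n → Fin n := fun v => e.symm ⟨key v, by
    rw [hs]; exact Finset.mem_image_of_mem _ (Finset.mem_univ v)⟩ with hσfun
  have hσmono : ∀ u v : Fin n, key u < key v → σfun u < σfun v := by
    intro u v huv
    exact (OrderIso.lt_iff_lt e.symm).mpr (Subtype.mk_lt_mk.mpr huv)
  have hσinj : Function.Injective σfun := by
    intro u v huv
    have := e.symm.injective huv
    exact hkeyinj (Subtype.mk_eq_mk.mp this)
  refine ⟨Equiv.ofBijective σfun (Finite.injective_iff_bijective.mp hσinj), ?_⟩
  intro a ha
  exact hσmono _ _ (hkeymono _ _ (hmono a ha))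

/-- The lower bound `|F₀| ≥ 2^{C(n,2)}`. -/
lemma F0_card_lower (n : ℕ) : 2 ^ (n.choose 2) ≤ (F0 n).card := by
  classical
  set P := ((Finset.univ ×ˢ Finset.univ : Finset (Fin n × Fin n)).filter
    fun p => p.1 < p.2) with hP
  have hsub : P.powerset ⊆ F0 n := by
    intro S hS
    have hSP := Finset.mem_powerset.mp hS
    have hincr : ∀ e ∈ S, e.1 < e.2 := by
      intro e he
      have := hSP he
      rw [hP, Finset.mem_filter] at this
      exact this.2
    rw [mem_F0]
    refine ⟨⟨?_, ?_⟩, ?_⟩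
    · intro v hv
      exact lt_irrefl v (hincr _ hv)
    · intro u v huv hvu
      exact absurd (hincr _ hvu) (not_lt.mpr (hincr _ huv).le)
    · exact acyclic_of_increasing S (fun v => v.val) (fun e he => hincr e he)
  calc 2 ^ (n.choose 2) = P.powerset.card := by
        rw [Finset.card_powerset, hP, card_ltPairs, Finset.card_univ, Fintype.card_fin]
    _ ≤ (F0 n).card := Finset.card_le_card hsub


/-- Gadget block length: `4` for `k = 3`, else `3`. -/
def LL (k : ℕ) : ℕ := if k = 3 then 4 else 3

lemma LL_ge3 (k : ℕ) : 3 ≤ LL k := by unfold LL; split <;> omega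

lemma LL_le4 (k : ℕ) : LL k ≤ 4 := by unfold LL; split <;> omega

lemma LL_pos (k : ℕ) : 0 < LL k := by have := LL_ge3 k; omega

lemma LL_ne (k : ℕ) (hk : 3 ≤ k) : LL k ≠ k := by
  unfold LL; split <;> omega

lemma mL_le (k n : ℕ) : (n / 4) * LL k ≤ n :=
  le_trans (Nat.mul_le_mul_left _ (LL_le4 k)) (Nat.div_mul_le_self n 4)

/-- A fixed topological ordering for each arc set (meaningful for acyclic ones). -/
noncomputable def sigE (E : ArcSet n) : Equiv.Perm (Fin n) :=
  if h : ∃ σ : Equiv.Perm (Fin n), ∀ e ∈ E, σ e.1 < σ e.2 then h.choose else 1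

/-- Position of a vertex in the chosen topological order. -/
noncomputable def posE (E : ArcSet n) (v : Fin n) : ℕ := ((sigE E) v : ℕ)

lemma posE_lt {E : ArcSet n} (hE : IsAcyclic E) : ∀ e ∈ E, posE E e.1 < posE E e.2 := by
  intro e he
  unfold posE sigE
  rw [dif_pos (exists_topo E hE)]
  exact (exists_topo E hE).choose_spec e he

lemma posE_inj {E : ArcSet n} {u v : Fin n} (h : posE E u = posE E v) : u = v :=
  (sigE E).injective (Fin.ext h)

lemma posE_lt_n (E : ArcSet n) (v : Fin n) : posE E v < n := (sigE E v).isLt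

lemma posE_symm (E : ArcSet n) (a : ℕ) (ha : a < n) :
    posE E ((sigE E).symm ⟨a, ha⟩) = a := by
  unfold posE
  rw [Equiv.apply_symm_apply]

/-- Membership of a vertex in block `i`. -/
def inB (k : ℕ) (E : ArcSet n) (i : ℕ) (v : Fin n) : Prop :=
  i * LL k ≤ posE E v ∧ posE E v < i * LL k + LL k

/-- Block `i` as a vertex set. -/
noncomputable def Bset (k : ℕ) (E : ArcSet n) (i : ℕ) : Finset (Fin n) :=
  Finset.univ.filter (inB k E i)

lemma mem_Bset {k : ℕ} {E : ArcSet n} {i : ℕ} {v : Fin n} :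
    v ∈ Bset k E i ↔ inB k E i v := by simp [Bset]

lemma block_eq {c p i j : ℕ} (hc : 0 < c) (hi : i * c ≤ p) (hi' : p < i * c + c)
    (hj : j * c ≤ p) (hj' : p < j * c + c) : i = j := by
  rcases Nat.lt_trichotomy i j with h | h | h
  · exfalso
    have : i * c + c ≤ j * c := by
      calc i * c + c = (i + 1) * c := by ring
        _ ≤ j * c := Nat.mul_le_mul_right c h
    omega
  · exact h
  · exfalso
    have : j * c + c ≤ i * c := by
      calc j * c + c = (j + 1) * c := by ring
        _ ≤ i * c := Nat.mul_le_mul_right c h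
    omega

/-- Gadget arcs on block `i`: a directed path along the block plus the long back arc. -/
noncomputable def gad (k : ℕ) (E : ArcSet n) (i : ℕ) : ArcSet n :=
  Finset.univ.filter (fun e : Fin n × Fin n => inB k E i e.1 ∧ inB k E i e.2 ∧
    (posE E e.2 = posE E e.1 + 1 ∨
      (posE E e.1 = i * LL k + (LL k - 1) ∧ posE E e.2 = i * LL k)))

/-- `e` has both endpoints inside some activated block. -/
def actP (k : ℕ) (E : ArcSet n) (X : Finset (Fin (n / 4))) (e : Fin n × Fin n) : Prop :=
  ∃ i ∈ X, inB k E (i : ℕ) e.1 ∧ inB k E (i : ℕ) e.2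

/-- The modified graph: delete all arcs inside activated blocks and insert the gadgets. -/
noncomputable def Phi (k : ℕ) (E : ArcSet n) (X : Finset (Fin (n / 4))) : ArcSet n :=
  E.filter (fun e => ¬ actP k E X e) ∪ X.biUnion (fun i => gad k E (i : ℕ))

/-- The stored memory: arcs of `E` inside activated blocks. -/
noncomputable def stP (k : ℕ) (E : ArcSet n) (X : Finset (Fin (n / 4))) : ArcSet n :=
  E.filter (actP k E X)

lemma H1 {k : ℕ} {E : ArcSet n} (hE : IsAcyclic E) {X : Finset (Fin (n / 4))}
    {u v : Fin n} (he : (u, v) ∈ Phi k E X) :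
    posE E u < posE E v ∨
      ∃ q ∈ X, posE E u = (q : ℕ) * LL k + (LL k - 1) ∧ posE E v = (q : ℕ) * LL k := by
  rcases Finset.mem_union.mp he with h | h
  · exact Or.inl (posE_lt hE _ (Finset.mem_filter.mp h).1)
  · obtain ⟨i, hiX, hig⟩ := Finset.mem_biUnion.mp h
    have hd := (Finset.mem_filter.mp hig).2
    simp only [gad, Finset.mem_filter] at hd
    rcases hd.2.2 with hc | hb
    · exact Or.inl (by omega)
    · exact Or.inr ⟨i, hiX, hb.1, hb.2⟩

lemma H2 {k : ℕ} {E : ArcSet n} {X : Finset (Fin (n / 4))}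
    {u v : Fin n} (he : (u, v) ∈ Phi k E X) {q : Fin (n / 4)} (hq : q ∈ X)
    (h1 : inB k E (q : ℕ) u) (h2 : inB k E (q : ℕ) v) :
    posE E v = posE E u + 1 ∨
      (posE E u = (q : ℕ) * LL k + (LL k - 1) ∧ posE E v = (q : ℕ) * LL k) := by
  rcases Finset.mem_union.mp he with h | h
  · exact absurd ⟨q, hq, h1, h2⟩ (Finset.mem_filter.mp h).2
  · obtain ⟨j, hjX, hjg⟩ := Finset.mem_biUnion.mp h
    have hj := (Finset.mem_filter.mp hjg).2
    simp only [gad, Finset.mem_filter] at hj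
    have hji : (j : ℕ) = (q : ℕ) :=
      block_eq (LL_pos k) hj.1.1 hj.1.2 h1.1 h1.2
    rw [hji] at hj
    exact hj.2.2

lemma card_pos_interval (E : ArcSet n) (a c : ℕ) (h : a + c ≤ n) :
    (Finset.univ.filter fun v : Fin n => a ≤ posE E v ∧ posE E v < a + c).card = c := by
  rcases Nat.eq_zero_or_pos c with rfl | hc
  · rw [Finset.card_eq_zero, Finset.filter_eq_empty_iff]
    intro v _
    omega
  · have hn : 0 < n := by omega
    have key : (Finset.univ.filter fun v : Fin n => a ≤ posE E v ∧ posE E v < a + c).card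
        = (Finset.Ico a (a + c)).card := by
      apply Finset.card_nbij' (fun v => posE E v)
        (fun p => (sigE E).symm ⟨p % n, Nat.mod_lt p hn⟩)
      · intro v hv
        simp only [Finset.mem_coe, Finset.mem_filter] at hv
        exact Finset.mem_Ico.mpr ⟨hv.2.1, hv.2.2⟩
      · intro p hp
        rw [Finset.mem_coe, Finset.mem_Ico] at hp
        have hpn : p < n := by omega
        simp only [Finset.mem_coe, Finset.mem_filter]
        have hfin : (⟨p % n, Nat.mod_lt p hn⟩ : Fin n) = ⟨p, hpn⟩ :=
          Fin.ext (by simp [Nat.mod_eq_of_lt hpn])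
        rw [hfin, posE_symm]
        exact ⟨Finset.mem_univ _, hp.1, hp.2⟩
      · intro v hv
        have hvn : posE E v < n := posE_lt_n E v
        have : (⟨posE E v % n, Nat.mod_lt _ hn⟩ : Fin n) = sigE E v := by
          apply Fin.ext
          simp only [Nat.mod_eq_of_lt hvn]
          rfl
        beta_reduce
        rw [this]
        exact (sigE E).symm_apply_apply v
      · intro p hp
        rw [Finset.mem_coe, Finset.mem_Ico] at hp
        have hpn : p < n := by omega
        have hfin : (⟨p % n, Nat.mod_lt p hn⟩ : Fin n) = ⟨p, hpn⟩ :=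
          Fin.ext (by simp [Nat.mod_eq_of_lt hpn])
        beta_reduce
        rw [hfin, posE_symm]
    rw [key, Nat.card_Ico]
    omega

lemma card_Bset {k : ℕ} (E : ArcSet n) {q : ℕ} (hq : q < n / 4) :
    (Bset k E q).card = LL k := by
  have h1 : q * LL k + LL k ≤ n := by
    calc q * LL k + LL k = (q + 1) * LL k := by ring
      _ ≤ (n / 4) * LL k := Nat.mul_le_mul_right _ (by omega)
      _ ≤ n := mL_le k n
  have hBeq : Bset k E q = Finset.univ.filter
      (fun v => q * LL k ≤ posE E v ∧ posE E v < q * LL k + LL k) := by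
    unfold Bset inB
    congr!
  rw [hBeq]
  exact card_pos_interval E (q * LL k) (LL k) h1


lemma cycle_struct {k : ℕ} {E : ArcSet n} (hE : IsAcyclic E)
    {X : Finset (Fin (n / 4))} {l : ℕ} [NeZero l]
    {f : ZMod l → Fin n} (hfi : Function.Injective f)
    (hfc : ∀ i, (f i, f (i + 1)) ∈ Phi k E X) :
    l = LL k ∧ ∃ q ∈ X, Finset.univ.image f = Bset k E (q : ℕ) := by
  have hl : 0 < l := Nat.pos_of_ne_zero (NeZero.ne l)
  have hL3 := LL_ge3 k
  obtain ⟨i₀, -, hmin0⟩ := Finset.exists_min_image Finset.univ (fun i => posE E (f i))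
    Finset.univ_nonempty
  have hmin : ∀ j, posE E (f i₀) ≤ posE E (f j) := fun j => hmin0 j (Finset.mem_univ j)
  have harc0 : (f (i₀ - 1), f i₀) ∈ Phi k E X := by
    have := hfc (i₀ - 1)
    rwa [sub_add_cancel] at this
  rcases H1 hE harc0 with hfwd | ⟨q, hqX, hq1, hq2⟩
  · exact absurd hfwd (not_lt.mpr (hmin _))
  set Q : ℕ := (q : ℕ) * LL k with hQdef
  -- no escape above the block
  have step : ∀ j : ZMod l, Q + (LL k - 1) < posE E (f j) →
      Q + (LL k - 1) < posE E (f (j + 1)) := by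
    intro j hj
    rcases H1 hE (hfc j) with h | ⟨r, hrX, hr1, hr2⟩
    · omega
    · have hrq : (q : ℕ) < (r : ℕ) := by
        have h1 : Q < (r : ℕ) * LL k := by omega
        by_contra hcon
        have : (r : ℕ) * LL k ≤ Q := Nat.mul_le_mul_right _ (by omega)
        omega
    -- then r * LL k ≥ Q + LL k
      have h2 : ((q : ℕ) + 1) * LL k ≤ (r : ℕ) * LL k := Nat.mul_le_mul_right _ hrq
      have h3 : ((q : ℕ) + 1) * LL k = Q + LL k := by rw [hQdef]; ring
      omega
  have noesc : ∀ t : ℕ, posE E (f (i₀ + (t : ZMod l))) ≤ Q + (LL k - 1) := by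
    by_contra hcon
    push_neg at hcon
    obtain ⟨t, ht⟩ := hcon
    have mono : ∀ s : ℕ, Q + (LL k - 1) < posE E (f (i₀ + ((t + s : ℕ) : ZMod l))) := by
      intro s
      induction s with
      | zero => simpa using ht
      | succ d ih =>
        have hst := step (i₀ + ((t + d : ℕ) : ZMod l)) ih
        have hcast : (i₀ + ((t + d : ℕ) : ZMod l)) + 1 = i₀ + ((t + (d + 1) : ℕ) : ZMod l) := by
          push_cast
          ring
        rwa [hcast] at hst
    have hkey := mono (l * (t + 1) - t)
    have hts : t + (l * (t + 1) - t) = l * (t + 1) := by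
      have : t ≤ l * (t + 1) := by
        calc t ≤ t + 1 := by omega
          _ ≤ l * (t + 1) := Nat.le_mul_of_pos_left _ hl
      omega
    rw [hts] at hkey
    have hzero : ((l * (t + 1) : ℕ) : ZMod l) = 0 := by
      push_cast
      simp [ZMod.natCast_self]
    rw [hzero, add_zero] at hkey
    omega
  have hlow : ∀ j, Q ≤ posE E (f j) := by
    intro j
    have := hmin j
    omega
  -- exact positions along the cycle
  have stepx : ∀ t : ℕ, t < l → posE E (f (i₀ + (t : ZMod l))) = Q + t := by
    intro t
    induction t with
    | zero => intro _; simpa using hq2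
    | succ d ih =>
      intro hdl
      have hd := ih (by omega)
      have harc : (f (i₀ + (d : ZMod l)), f ((i₀ + (d : ZMod l)) + 1)) ∈ Phi k E X :=
        hfc _
      have hcast : (i₀ + ((d : ℕ) : ZMod l)) + 1 = i₀ + (((d + 1 : ℕ)) : ZMod l) := by
        push_cast
        ring
      have hub1 := noesc d
      have hub2 := noesc (d + 1)
      have hlb2 := hlow (i₀ + (((d + 1 : ℕ)) : ZMod l))
      have hin1 : inB k E (q : ℕ) (f (i₀ + (d : ZMod l))) := by
        constructor <;> omega
      have hin2 : inB k E (q : ℕ) (f ((i₀ + (d : ZMod l)) + 1)) := by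
        rw [hcast]
        constructor <;> omega
      rcases H2 harc hqX hin1 hin2 with hcons | ⟨hb1, hb2⟩
      · rw [← hcast, hcons, hd]
        omega
      · exfalso
        have hfeq : f ((i₀ + (d : ZMod l)) + 1) = f i₀ := posE_inj (by rw [hb2, hq2, hQdef])
        have hieq := hfi hfeq
        have : ((d + 1 : ℕ) : ZMod l) = 0 := by
          have := hieq
          rw [hcast] at this
          have h0 : i₀ + (((d + 1 : ℕ)) : ZMod l) = i₀ + 0 := by rw [this, add_zero]
          exact add_left_cancel h0
        rw [ZMod.natCast_eq_zero_iff] at this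
        have := Nat.le_of_dvd (by omega) this
        omega
  -- the length is exactly LL k
  have hlen : l = LL k := by
    have hx := stepx (l - 1) (by omega)
    have hcast : (i₀ + (((l - 1 : ℕ)) : ZMod l)) + 1 = i₀ := by
      have h1 : (((l - 1 : ℕ)) : ZMod l) + 1 = 0 := by
        have : ((l - 1 : ℕ) + 1 : ℕ) = l := by omega
        calc (((l - 1 : ℕ)) : ZMod l) + 1 = (((l - 1 : ℕ) + 1 : ℕ) : ZMod l) := by push_cast; ring
          _ = ((l : ℕ) : ZMod l) := by rw [this]
          _ = 0 := ZMod.natCast_self l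
      rw [add_assoc, h1, add_zero]
    have harc : (f (i₀ + (((l - 1 : ℕ)) : ZMod l)), f ((i₀ + (((l - 1 : ℕ)) : ZMod l)) + 1)) ∈
        Phi k E X := hfc _
    rw [hcast] at harc
    have hub := noesc (l - 1)
    have hin1 : inB k E (q : ℕ) (f (i₀ + (((l - 1 : ℕ)) : ZMod l))) := by
      constructor <;> omega
    have hin2 : inB k E (q : ℕ) (f i₀) := by
      constructor <;> omega
    rcases H2 harc hqX hin1 hin2 with hcons | ⟨hb1, hb2⟩
    · omega
    · omega
  refine ⟨hlen, q, hqX, ?_⟩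
  apply Finset.eq_of_subset_of_card_le
  · intro v hv
    obtain ⟨j, -, rfl⟩ := Finset.mem_image.mp hv
    have hj : i₀ + ((((j - i₀).val : ℕ)) : ZMod l) = j := by
      have : (((j - i₀).val : ℕ) : ZMod l) = j - i₀ := ZMod.natCast_rightInverse (j - i₀)
      rw [this]
      ring
    have hval := ZMod.val_lt (j - i₀)
    have := stepx ((j - i₀).val) hval
    rw [hj] at this
    rw [mem_Bset]
    constructor <;> omega
  · rw [card_Bset E q.isLt, Finset.card_image_of_injective _ hfi, Finset.card_univ,
      ZMod.card, hlen]

lemma gad_cycle {k : ℕ} {E : ArcSet n} {X : Finset (Fin (n / 4))}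
    {q : Fin (n / 4)} (hq : q ∈ X) :
    ∃ f : ZMod (LL k) → Fin n, Function.Injective f ∧
      (∀ i, (f i, f (i + 1)) ∈ Phi k E X) ∧
      (∀ t, posE E (f t) = (q : ℕ) * LL k + t.val) := by
  have hL3 := LL_ge3 k
  haveI : NeZero (LL k) := ⟨by omega⟩
  have hbound : ∀ t : ZMod (LL k), (q : ℕ) * LL k + t.val < n := by
    intro t
    have h1 := ZMod.val_lt t
    have h2 : ((q : ℕ) + 1) * LL k ≤ (n / 4) * LL k := Nat.mul_le_mul_right _ q.isLt
    have h3 := mL_le k n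
    have h4 : ((q : ℕ) + 1) * LL k = (q : ℕ) * LL k + LL k := by ring
    omega
  set f : ZMod (LL k) → Fin n := fun t => (sigE E).symm ⟨(q : ℕ) * LL k + t.val, hbound t⟩
    with hf
  have hpos : ∀ t, posE E (f t) = (q : ℕ) * LL k + t.val := by
    intro t
    rw [hf]
    exact posE_symm E _ _
  refine ⟨f, ?_, ?_, hpos⟩
  · intro a b hab
    rw [hf] at hab
    have := (sigE E).symm.injective hab
    have hval : a.val = b.val := by
      have := Fin.mk.injEq _ _ _ _ ▸ this
      omega
    exact ZMod.val_injective _ hval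
  · intro t
    have hvadd : (t + 1).val = (t.val + 1) % LL k := by
      rw [ZMod.val_add, ZMod.val_one_eq_one_mod, Nat.add_mod_mod]
    apply Finset.mem_union_right
    apply Finset.mem_biUnion.mpr
    refine ⟨q, hq, ?_⟩
    simp only [gad, Finset.mem_filter, Finset.mem_univ, true_and]
    have htval := ZMod.val_lt t
    have hp1 := hpos t
    have hp2 := hpos (t + 1)
    rcases Nat.lt_or_ge (t.val + 1) (LL k) with hlt | hge
    · have hv1 : (t + 1).val = t.val + 1 := by rw [hvadd, Nat.mod_eq_of_lt hlt]
      rw [hv1] at hp2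
      refine ⟨?_, ?_, Or.inl (by omega)⟩
      · constructor <;> omega
      · constructor <;> omega
    · have htv : t.val = LL k - 1 := by omega
      have hv1 : (t + 1).val = 0 := by
        rw [hvadd, htv, show LL k - 1 + 1 = LL k by omega, Nat.mod_self]
      rw [hv1] at hp2
      refine ⟨?_, ?_, Or.inr ⟨by omega, by omega⟩⟩
      · constructor <;> omega
      · constructor <;> omega
lemma inB_mem_of_gad {k : ℕ} {E : ArcSet n} {i : ℕ} {e : Fin n × Fin n}
    (h : e ∈ gad k E i) : inB k E i e.1 ∧ inB k E i e.2 := by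
  have := (Finset.mem_filter.mp h).2
  exact ⟨this.1, this.2.1⟩

lemma Phi_oriented {k : ℕ} {E : ArcSet n} (hEa : IsAcyclic E) (hEo : IsOriented E)
    {X : Finset (Fin (n / 4))} : IsOriented (Phi k E X) := by
  have hL3 := LL_ge3 k
  constructor
  · intro v hv
    rcases H1 hEa hv with h | ⟨q, -, h1, h2⟩
    · exact lt_irrefl _ h
    · omega
  · intro u v huv hvu
    rcases H1 hEa huv with h1 | ⟨q, hqX, hq1, hq2⟩
    · rcases H1 hEa hvu with h2 | ⟨r, hrX, hr1, hr2⟩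
      · omega
      · -- (v,u) is the back arc of block r; (u,v) is inside block r
        have hinu : inB k E (r : ℕ) u := by constructor <;> omega
        have hinv : inB k E (r : ℕ) v := by constructor <;> omega
        rcases H2 huv hrX hinu hinv with hc | hb
        · omega
        · omega
    · -- (u,v) is the back arc of block q; (v,u) is inside block q
      have hinu : inB k E (q : ℕ) u := by constructor <;> omega
      have hinv : inB k E (q : ℕ) v := by constructor <;> omega
      rcases H2 hvu hqX hinv hinu with hc | hb
      · omega
      · omega

lemma Phi_ckfree {k : ℕ} (hk : 3 ≤ k) {E : ArcSet n} (hEa : IsAcyclic E)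
    {X : Finset (Fin (n / 4))} : CkFree k (Phi k E X) := by
  rintro ⟨f, hfi, hfc⟩
  haveI : NeZero k := ⟨by omega⟩
  have := (cycle_struct hEa hfi hfc).1
  exact (LL_ne k hk) this.symm

/-- The family of vertex sets of directed cycles of a digraph. -/
def CycSets (G : ArcSet n) : Set (Finset (Fin n)) :=
  {S | ∃ l, 0 < l ∧ ∃ f : ZMod l → Fin n, Function.Injective f ∧
    (∀ i, (f i, f (i + 1)) ∈ G) ∧ ∀ v, v ∈ S ↔ ∃ i, f i = v}

lemma cycSets_char {k : ℕ} {E : ArcSet n} (hEa : IsAcyclic E)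
    {X : Finset (Fin (n / 4))} :
    CycSets (Phi k E X) = ↑(X.image (fun i : Fin (n / 4) => Bset k E (i : ℕ))) := by
  ext S
  constructor
  · rintro ⟨l, hl, f, hfi, hfc, hSiff⟩
    haveI : NeZero l := ⟨hl.ne'⟩
    obtain ⟨-, q, hqX, himg⟩ := cycle_struct hEa hfi hfc
    rw [Finset.mem_coe, Finset.mem_image]
    refine ⟨q, hqX, ?_⟩
    rw [← himg]
    ext v
    rw [Finset.mem_image]
    constructor
    · rintro ⟨j, -, rfl⟩
      exact (hSiff (f j)).mpr ⟨j, rfl⟩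
    · intro hv
      obtain ⟨j, rfl⟩ := (hSiff v).mp hv
      exact ⟨j, Finset.mem_univ j, rfl⟩
  · intro hS
    rw [Finset.mem_coe, Finset.mem_image] at hS
    obtain ⟨q, hqX, rfl⟩ := hS
    haveI : NeZero (LL k) := ⟨by have := LL_ge3 k; omega⟩
    obtain ⟨f, hfi, hfc, hfpos⟩ := gad_cycle (k := k) (E := E) hqX
    obtain ⟨-, r, hrX, himg⟩ := cycle_struct hEa hfi hfc
    have hrq : Bset k E (r : ℕ) = Bset k E (q : ℕ) := by
      have h0 : f 0 ∈ Finset.univ.image f := Finset.mem_image_of_mem f (Finset.mem_univ 0)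
      rw [himg, mem_Bset] at h0
      have hp0 : posE E (f 0) = (q : ℕ) * LL k := by
        rw [hfpos 0, ZMod.val_zero, Nat.add_zero]
      have h01 := h0.1
      have h02 := h0.2
      rw [hp0] at h01 h02
      have hL := LL_pos k
      have : (r : ℕ) = (q : ℕ) := block_eq hL h01 h02 (le_refl _) (by omega)
      rw [this]
    refine ⟨LL k, LL_pos k, f, hfi, hfc, ?_⟩
    intro v
    rw [← hrq, ← himg, Finset.mem_image]
    constructor
    · rintro ⟨j, -, rfl⟩; exact ⟨j, rfl⟩
    · rintro ⟨j, rfl⟩; exact ⟨j, Finset.mem_univ j, rfl⟩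

lemma Bset_inj {k : ℕ} {E : ArcSet n} {i j : Fin (n / 4)}
    (h : Bset k E (i : ℕ) = Bset k E (j : ℕ)) : i = j := by
  have hL := LL_pos k
  have hlt : (i : ℕ) * LL k + LL k ≤ n := by
    calc (i : ℕ) * LL k + LL k = ((i : ℕ) + 1) * LL k := by ring
      _ ≤ (n / 4) * LL k := Nat.mul_le_mul_right _ i.isLt
      _ ≤ n := mL_le k n
  set v : Fin n := (sigE E).symm ⟨(i : ℕ) * LL k, by omega⟩ with hv
  have hvi : v ∈ Bset k E (i : ℕ) := by
    rw [mem_Bset]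
    constructor <;> rw [hv, posE_symm] <;> omega
  have hvj : v ∈ Bset k E (j : ℕ) := h ▸ hvi
  rw [mem_Bset] at hvj
  have hpv : posE E v = (i : ℕ) * LL k := by rw [hv, posE_symm]
  have h1 := hvj.1
  have h2 := hvj.2
  rw [hpv] at h1 h2
  exact Fin.ext (block_eq hL (le_refl _) (by omega) h1 h2)

lemma image_eq {k : ℕ} {E E' : ArcSet n} (hEa : IsAcyclic E) (hEa' : IsAcyclic E')
    {X X' : Finset (Fin (n / 4))} (hΦ : Phi k E X = Phi k E' X') :
    X.image (fun i : Fin (n / 4) => Bset k E (i : ℕ)) = X'.image (fun i : Fin (n / 4) => Bset k E' (i : ℕ)) := by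
  apply Finset.coe_injective
  rw [← cycSets_char hEa, hΦ, cycSets_char hEa']

lemma act_iff {k : ℕ} {E E' : ArcSet n} (hEa : IsAcyclic E) (hEa' : IsAcyclic E')
    {X X' : Finset (Fin (n / 4))} (hΦ : Phi k E X = Phi k E' X') (e : Fin n × Fin n) :
    actP k E X e ↔ actP k E' X' e := by
  have hBB := image_eq hEa hEa' hΦ
  constructor
  · rintro ⟨i, hi, h1, h2⟩
    have : Bset k E (i : ℕ) ∈ X.image (fun i : Fin (n / 4) => Bset k E (i : ℕ)) :=
      Finset.mem_image.mpr ⟨i, hi, rfl⟩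
    rw [hBB] at this
    obtain ⟨j, hj, hBij⟩ := Finset.mem_image.mp this
    refine ⟨j, hj, ?_, ?_⟩
    · rw [← mem_Bset, hBij, mem_Bset]; exact h1
    · rw [← mem_Bset, hBij, mem_Bset]; exact h2
  · rintro ⟨i, hi, h1, h2⟩
    have : Bset k E' (i : ℕ) ∈ X'.image (fun i : Fin (n / 4) => Bset k E' (i : ℕ)) :=
      Finset.mem_image.mpr ⟨i, hi, rfl⟩
    rw [← hBB] at this
    obtain ⟨j, hj, hBij⟩ := Finset.mem_image.mp this
    refine ⟨j, hj, ?_, ?_⟩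
    · rw [← mem_Bset, hBij, mem_Bset]; exact h1
    · rw [← mem_Bset, hBij, mem_Bset]; exact h2

lemma subset_decode {k : ℕ} {E E' : ArcSet n} (hEa : IsAcyclic E) (hEa' : IsAcyclic E')
    {X X' : Finset (Fin (n / 4))} (hΦ : Phi k E X = Phi k E' X')
    (hst : stP k E X = stP k E' X') : E ⊆ E' := by
  intro a ha
  by_cases hact : actP k E X a
  · have : a ∈ stP k E X := Finset.mem_filter.mpr ⟨ha, hact⟩
    rw [hst] at this
    exact Finset.filter_subset _ _ this
  · have h1 : a ∈ Phi k E X :=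
      Finset.mem_union_left _ (Finset.mem_filter.mpr ⟨ha, hact⟩)
    rw [hΦ] at h1
    rcases Finset.mem_union.mp h1 with h | h
    · exact Finset.filter_subset _ _ h
    · exfalso
      obtain ⟨j, hj, hg⟩ := Finset.mem_biUnion.mp h
      have := inB_mem_of_gad hg
      have hact' : actP k E' X' a := ⟨j, hj, this.1, this.2⟩
      exact hact ((act_iff hEa hEa' hΦ a).mpr hact')

lemma X_eq {k : ℕ} {E : ArcSet n} (hEa : IsAcyclic E)
    {X X' : Finset (Fin (n / 4))} (hΦ : Phi k E X = Phi k E X') : X = X' := by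
  have hBB := image_eq hEa hEa hΦ
  ext i
  constructor
  · intro hi
    have : Bset k E (i : ℕ) ∈ X.image (fun i : Fin (n / 4) => Bset k E (i : ℕ)) :=
      Finset.mem_image.mpr ⟨i, hi, rfl⟩
    rw [hBB] at this
    obtain ⟨j, hj, hBij⟩ := Finset.mem_image.mp this
    rwa [← Bset_inj hBij]
  · intro hi
    have : Bset k E (i : ℕ) ∈ X'.image (fun i : Fin (n / 4) => Bset k E (i : ℕ)) :=
      Finset.mem_image.mpr ⟨i, hi, rfl⟩
    rw [← hBB] at this
    obtain ⟨j, hj, hBij⟩ := Finset.mem_image.mp this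
    rwa [← Bset_inj hBij]

lemma decode {k : ℕ} {E E' : ArcSet n} (hEa : IsAcyclic E) (hEa' : IsAcyclic E')
    {X X' : Finset (Fin (n / 4))} (hΦ : Phi k E X = Phi k E' X')
    (hst : stP k E X = stP k E' X') : E = E' ∧ X = X' := by
  have hE : E = E' :=
    Finset.Subset.antisymm (subset_decode hEa hEa' hΦ hst)
      (subset_decode hEa' hEa hΦ.symm hst.symm)
  subst hE
  exact ⟨rfl, X_eq hEa hΦ⟩
lemma weight_eq {k : ℕ} {E E' : ArcSet n} (hEa : IsAcyclic E) (hEa' : IsAcyclic E')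
    {X X' : Finset (Fin (n / 4))} (hΦ : Phi k E X = Phi k E' X') : X.card = X'.card := by
  have hBB := image_eq hEa hEa' hΦ
  calc X.card = (X.image (fun i : Fin (n / 4) => Bset k E (i : ℕ))).card :=
      (Finset.card_image_of_injective X (fun a b h => Bset_inj h)).symm
    _ = (X'.image (fun i : Fin (n / 4) => Bset k E' (i : ℕ))).card := by rw [hBB]
    _ = X'.card := Finset.card_image_of_injective X' (fun a b h => Bset_inj h)

lemma main_count {k : ℕ} (hk : 3 ≤ k) (n : ℕ) :
    (F0 n).card * 730 ^ (n / 4) ≤ fnk n k * 729 ^ (n / 4) := by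
  classical
  set m := n / 4 with hm
  set D := (F0 n) ×ˢ (Finset.univ : Finset (Finset (Fin m))) with hD
  set w : ArcSet n × Finset (Fin m) → ℕ := fun p => 729 ^ (m - p.2.card) with hw
  set T := Finset.univ.filter (fun G : ArcSet n => IsOriented G ∧ CkFree k G) with hT
  have hfnk : fnk n k = T.card := rfl
  have hmaps : ∀ p ∈ D, Phi k p.1 p.2 ∈ T := by
    intro p hp
    rw [hD, Finset.mem_product] at hp
    have hE := mem_F0.mp hp.1
    rw [hT, Finset.mem_filter]
    exact ⟨Finset.mem_univ _, Phi_oriented hE.2 hE.1, Phi_ckfree hk hE.2⟩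
  have hsum := Finset.sum_fiberwise_of_maps_to hmaps w
  have hLHS : (∑ p ∈ D, w p) = (F0 n).card * 730 ^ m := by
    rw [hD, Finset.sum_product]
    have hinner : ∀ E : ArcSet n,
        (∑ X ∈ (Finset.univ : Finset (Finset (Fin m))), w (E, X)) = 730 ^ m := by
      intro E
      have hpa := Finset.prod_add (fun _ : Fin m => (1 : ℕ)) (fun _ : Fin m => 729)
        Finset.univ
      simp only [Finset.prod_const, Finset.prod_const_one, one_mul, Finset.card_univ,
        Fintype.card_fin] at hpa
      rw [Finset.powerset_univ] at hpa
      have h730 : (730 : ℕ) = 1 + 729 := by norm_num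
      rw [h730, hpa]
      apply Finset.sum_congr rfl
      intro X _
      simp only [hw, one_pow, one_mul]
      congr 1
      rw [Finset.card_sdiff_of_subset (Finset.subset_univ X), Finset.card_univ, Fintype.card_fin]
    calc (∑ E ∈ F0 n, ∑ X ∈ (Finset.univ : Finset (Finset (Fin m))), w (E, X))
        = ∑ _E ∈ F0 n, 730 ^ m := Finset.sum_congr rfl (fun E _ => hinner E)
      _ = (F0 n).card * 730 ^ m := by rw [Finset.sum_const, smul_eq_mul]
  have hfib : ∀ G ∈ T, (∑ p ∈ D.filter (fun p => Phi k p.1 p.2 = G), w p) ≤ 729 ^ m := by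
    intro G hG
    set fib := D.filter (fun p => Phi k p.1 p.2 = G) with hfibdef
    rcases fib.eq_empty_or_nonempty with he | ⟨p₀, hp₀⟩
    · rw [he]
      simp
    · have hp₀' := Finset.mem_filter.mp hp₀
      have hp₀D := hp₀'.1
      have hp₀G := hp₀'.2
      rw [hD, Finset.mem_product] at hp₀D
      have hE₀ := mem_F0.mp hp₀D.1
      set j := p₀.2.card with hj
      have hjm : j ≤ m := by
        have hcle := Finset.card_le_univ p₀.2
        rw [Fintype.card_fin] at hcle
        exact hcle
      have hval : ∀ p ∈ fib, (IsOriented p.1 ∧ IsAcyclic p.1) ∧ Phi k p.1 p.2 = G := by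
        intro p hp
        have h := Finset.mem_filter.mp hp
        have hD' := h.1
        rw [hD, Finset.mem_product] at hD'
        exact ⟨mem_F0.mp hD'.1, h.2⟩
      have hcards : ∀ p ∈ fib, p.2.card = j := by
        intro p hp
        obtain ⟨⟨hpo, hpa⟩, hpG⟩ := hval p hp
        exact weight_eq hpa hE₀.2 (hpG.trans hp₀G.symm)
      set UR := p₀.2.biUnion (fun i => ((Bset k p₀.1 (i : ℕ) ×ˢ Bset k p₀.1 (i : ℕ)).filter
        (fun e => e.1 < e.2))) with hUR
      have hURcard : UR.card ≤ 6 * j := by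
        calc UR.card ≤ ∑ i ∈ p₀.2, (((Bset k p₀.1 (i : ℕ) ×ˢ Bset k p₀.1 (i : ℕ)).filter
            (fun e => e.1 < e.2))).card := Finset.card_biUnion_le
          _ ≤ ∑ _i ∈ p₀.2, 6 := by
              apply Finset.sum_le_sum
              intro i _
              rw [card_ltPairs, card_Bset p₀.1 i.isLt]
              calc (LL k).choose 2 ≤ (4).choose 2 := Nat.choose_le_choose 2 (LL_le4 k)
                _ = 6 := by decide
          _ = 6 * j := by rw [Finset.sum_const, smul_eq_mul, hj, mul_comm]
      set J : ArcSet n × Finset (Fin m) → (↥UR → Fin 3) := fun p q =>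
        if ((q : Fin n × Fin n)) ∈ stP k p.1 p.2 then 1
        else if ((q : Fin n × Fin n).2, (q : Fin n × Fin n).1) ∈ stP k p.1 p.2 then 2
        else 0 with hJ
      have hstsub : ∀ p ∈ fib, ∀ a ∈ stP k p.1 p.2,
          (a.1 ≠ a.2) ∧ ∃ i₀ ∈ p₀.2, a.1 ∈ Bset k p₀.1 (i₀ : ℕ) ∧
            a.2 ∈ Bset k p₀.1 (i₀ : ℕ) := by
        intro p hp a ha
        obtain ⟨⟨hpo, hpa⟩, hpG⟩ := hval p hp
        have haE : a ∈ p.1 := Finset.filter_subset _ _ ha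
        have hact : actP k p.1 p.2 a := (Finset.mem_filter.mp ha).2
        obtain ⟨i, hi, h1, h2⟩ := hact
        have hBB := image_eq hpa hE₀.2 (hpG.trans hp₀G.symm)
        have hmem : Bset k p.1 (i : ℕ) ∈ p₀.2.image
            (fun i : Fin (n / 4) => Bset k p₀.1 (i : ℕ)) := by
          rw [← hBB]
          exact Finset.mem_image.mpr ⟨i, hi, rfl⟩
        obtain ⟨i₀, hi₀, hBi⟩ := Finset.mem_image.mp hmem
        refine ⟨?_, i₀, hi₀, ?_, ?_⟩
        · intro hEq
          have haE' : (a.1, a.2) ∈ p.1 := haE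
          rw [hEq] at haE'
          exact hpo.1 a.2 haE'
        · rw [hBi, mem_Bset]; exact h1
        · rw [hBi, mem_Bset]; exact h2
      have hstkey : ∀ p p', p ∈ fib → p' ∈ fib → J p = J p' →
          stP k p.1 p.2 ⊆ stP k p'.1 p'.2 := by
        intro p p' hp hp' hJeq a ha
        obtain ⟨hne, i₀, hi₀, hb1, hb2⟩ := hstsub p hp a ha
        rcases lt_or_gt_of_ne hne with hlt | hgt
        · have hqUR : a ∈ UR := by
            rw [hUR]
            apply Finset.mem_biUnion.mpr
            refine ⟨i₀, hi₀, ?_⟩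
            rw [Finset.mem_filter, Finset.mem_product]
            exact ⟨⟨hb1, hb2⟩, hlt⟩
          have hc := congrFun hJeq ⟨a, hqUR⟩
          simp only [hJ] at hc
          rw [if_pos ha] at hc
          by_cases h1 : (a ∈ stP k p'.1 p'.2)
          · exact h1
          · exfalso
            rw [if_neg h1] at hc
            by_cases h2 : ((a.2, a.1) ∈ stP k p'.1 p'.2)
            · rw [if_pos h2] at hc; exact absurd hc (by decide)
            · rw [if_neg h2] at hc; exact absurd hc (by decide)
        · have hqUR : ((a.2, a.1) : Fin n × Fin n) ∈ UR := by
            rw [hUR]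
            apply Finset.mem_biUnion.mpr
            refine ⟨i₀, hi₀, ?_⟩
            rw [Finset.mem_filter, Finset.mem_product]
            exact ⟨⟨hb2, hb1⟩, hgt⟩
          have hc := congrFun hJeq ⟨(a.2, a.1), hqUR⟩
          simp only [hJ] at hc
          have hno : ((a.2, a.1) : Fin n × Fin n) ∉ stP k p.1 p.2 := by
            intro hmem
            have h1 := Finset.filter_subset (actP k p.1 p.2) p.1 ha
            have h2 := Finset.filter_subset (actP k p.1 p.2) p.1 hmem
            obtain ⟨⟨hpo, -⟩, -⟩ := hval p hp
            exact hpo.2 a.1 a.2 h1 h2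
          rw [if_neg hno, if_pos (show ((a.2, a.1).2, (a.2, a.1).1) ∈ stP k p.1 p.2 from ha)]
            at hc
          by_cases h1 : (((a.2, a.1) : Fin n × Fin n) ∈ stP k p'.1 p'.2)
          · exfalso
            rw [if_pos h1] at hc
            exact absurd hc (by decide)
          · rw [if_neg h1] at hc
            by_cases h2 : (((a.2, a.1).2, (a.2, a.1).1) ∈ stP k p'.1 p'.2)
            · exact h2
            · exfalso
              rw [if_neg h2] at hc
              exact absurd hc (by decide)
      have hinjJ : Set.InjOn J fib := by
        intro p hp p' hp' hJeq
        have hst : stP k p.1 p.2 = stP k p'.1 p'.2 :=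
          Finset.Subset.antisymm (hstkey p p' hp hp' hJeq) (hstkey p' p hp' hp hJeq.symm)
        obtain ⟨⟨-, hpa⟩, hpG⟩ := hval p hp
        obtain ⟨⟨-, hpa'⟩, hpG'⟩ := hval p' hp'
        obtain ⟨h1, h2⟩ := decode hpa hpa' (hpG.trans hpG'.symm) hst
        exact Prod.ext h1 h2
      have hfibcard : fib.card ≤ 729 ^ j := by
        have hc := Finset.card_le_card_of_injOn J (fun p _ => Finset.mem_univ (J p)) hinjJ
        rw [Finset.card_univ] at hc
        calc fib.card ≤ Fintype.card (↥UR → Fin 3) := hc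
          _ = 3 ^ UR.card := by rw [Fintype.card_fun, Fintype.card_fin, Fintype.card_coe]
          _ ≤ 3 ^ (6 * j) := Nat.pow_le_pow_right (by norm_num) hURcard
          _ = 729 ^ j := by rw [pow_mul]; norm_num
      calc (∑ p ∈ fib, w p) = ∑ p ∈ fib, 729 ^ (m - j) := by
            apply Finset.sum_congr rfl
            intro p hp
            simp only [hw]
            rw [hcards p hp]
        _ = fib.card * 729 ^ (m - j) := by rw [Finset.sum_const, smul_eq_mul]
        _ ≤ 729 ^ j * 729 ^ (m - j) := Nat.mul_le_mul_right _ hfibcard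
        _ = 729 ^ m := by rw [← pow_add]; congr 1; omega
  calc (F0 n).card * 730 ^ m = ∑ p ∈ D, w p := hLHS.symm
    _ = ∑ G ∈ T, ∑ p ∈ D.filter (fun p => Phi k p.1 p.2 = G), w p := hsum.symm
    _ ≤ ∑ _G ∈ T, 729 ^ m := Finset.sum_le_sum hfib
    _ = T.card * 729 ^ m := by rw [Finset.sum_const, smul_eq_mul]
    _ = fnk n k * 729 ^ m := by rw [hfnk]

lemma numeric_bound {n : ℕ} (hn : 4 ≤ n) :
    (2 : ℝ) ^ (((2 : ℝ) ^ 13)⁻¹ * n) ≤ ((730 : ℝ) / 729) ^ (n / 4) := by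
  have hm1 : 1 ≤ n / 4 := (Nat.one_le_div_iff (by norm_num)).mpr hn
  set m := n / 4 with hm
  have hnm : (n : ℝ) ≤ 4 * m + 4 := by
    have h1 : n < 4 * m + 4 := by
      have h2 := Nat.div_add_mod n 4
      have h3 : n % 4 < 4 := Nat.mod_lt n (by norm_num)
      omega
    exact_mod_cast h1.le
  have hmr : (1 : ℝ) ≤ (m : ℝ) := by exact_mod_cast hm1
  have hexp : ((2 : ℝ) ^ 13)⁻¹ * n ≤ (m : ℝ) / 1024 := by
    have h2 : ((2 : ℝ) ^ 13) = 8192 := by norm_num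
    rw [h2, inv_mul_eq_div, div_le_div_iff₀ (by norm_num) (by norm_num)]
    linarith
  have h3 : (2 : ℝ) ^ (((2 : ℝ) ^ 13)⁻¹ * n) ≤ (2 : ℝ) ^ ((m : ℝ) / 1024) :=
    Real.rpow_le_rpow_of_exponent_le one_le_two hexp
  have h4 : (2 : ℝ) ^ ((m : ℝ) / 1024) = ((2 : ℝ) ^ ((1 : ℝ) / 1024)) ^ m := by
    rw [← Real.rpow_natCast ((2 : ℝ) ^ ((1 : ℝ) / 1024)) m,
      ← Real.rpow_mul (by norm_num : (0 : ℝ) ≤ 2)]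
    congr 1
    ring
  have h5 : ((2 : ℝ) ^ ((1 : ℝ) / 1024)) ≤ 730 / 729 := by
    have hpow : ((2 : ℝ) ^ ((1 : ℝ) / 1024)) ^ (1024 : ℕ) ≤ ((730 : ℝ) / 729) ^ (1024 : ℕ) := by
      have hL : ((2 : ℝ) ^ ((1 : ℝ) / 1024)) ^ (1024 : ℕ) = 2 := by
        rw [← Real.rpow_natCast ((2 : ℝ) ^ ((1 : ℝ) / 1024)) 1024,
          ← Real.rpow_mul (by norm_num : (0 : ℝ) ≤ 2)]
        norm_num
      rw [hL]
      have hb := one_add_mul_le_pow (a := (1 : ℝ) / 729) (by norm_num) 1024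
      have h730 : ((730 : ℝ) / 729) = 1 + 1 / 729 := by norm_num
      rw [h730]
      calc (2 : ℝ) ≤ 1 + (1024 : ℕ) * ((1 : ℝ) / 729) := by push_cast; norm_num
        _ ≤ _ := hb
    exact le_of_pow_le_pow_left₀ (by norm_num) (by norm_num) hpow
  calc (2 : ℝ) ^ (((2 : ℝ) ^ 13)⁻¹ * n) ≤ (2 : ℝ) ^ ((m : ℝ) / 1024) := h3
    _ = ((2 : ℝ) ^ ((1 : ℝ) / 1024)) ^ m := h4
    _ ≤ ((730 : ℝ) / 729) ^ m :=
        pow_le_pow_left₀ (Real.rpow_nonneg (by norm_num) _) h5 m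

end CkProof

/-- For `k ≥ 3`, `c = 2⁻¹³` and all large `n`,
`f(n,C_k) ≥ 2^{cn} |F_0| ≥ 2^{C(n,2) + cn}`. -/
theorem fnk_lower_bound (k : ℕ) (hk : 3 ≤ k) :
    ∃ N : ℕ, ∀ n ≥ N,
      (2 : ℝ) ^ (((2 : ℝ) ^ 13)⁻¹ * n) * ((F0 n).card : ℝ) ≤ (fnk n k : ℝ) ∧
      (2 : ℝ) ^ ((n.choose 2 : ℝ) + ((2 : ℝ) ^ 13)⁻¹ * n) ≤
        (2 : ℝ) ^ (((2 : ℝ) ^ 13)⁻¹ * n) * ((F0 n).card : ℝ) := by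
  refine ⟨4, fun n hn => ?_⟩
  have hF0 : (2 : ℕ) ^ (n.choose 2) ≤ (F0 n).card := CkProof.F0_card_lower n
  have hmain := CkProof.main_count hk n
  have h729pos : (0 : ℝ) < (729 : ℝ) ^ (n / 4) := by positivity
  have hcast : ((F0 n).card : ℝ) * 730 ^ (n / 4) ≤ (fnk n k : ℝ) * 729 ^ (n / 4) := by
    exact_mod_cast hmain
  have hR : ((F0 n).card : ℝ) * ((730 : ℝ) / 729) ^ (n / 4) ≤ (fnk n k : ℝ) := by
    rw [div_pow, ← mul_div_assoc, div_le_iff₀ h729pos]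
    exact hcast
  have hnum := CkProof.numeric_bound hn
  have hfirst : (2 : ℝ) ^ (((2 : ℝ) ^ 13)⁻¹ * n) * ((F0 n).card : ℝ) ≤ (fnk n k : ℝ) := by
    calc (2 : ℝ) ^ (((2 : ℝ) ^ 13)⁻¹ * n) * ((F0 n).card : ℝ)
        ≤ ((730 : ℝ) / 729) ^ (n / 4) * ((F0 n).card : ℝ) :=
          mul_le_mul_of_nonneg_right hnum (Nat.cast_nonneg _)
      _ = ((F0 n).card : ℝ) * ((730 : ℝ) / 729) ^ (n / 4) := mul_comm _ _
      _ ≤ (fnk n k : ℝ) := hR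
  refine ⟨hfirst, ?_⟩
  rw [Real.rpow_add two_pos, mul_comm ((2 : ℝ) ^ ((n.choose 2 : ℝ)))]
  apply mul_le_mul_of_nonneg_left ?_ (Real.rpow_nonneg (by norm_num) _)
  rw [Real.rpow_natCast]
  calc (2 : ℝ) ^ (n.choose 2) = ((2 ^ (n.choose 2) : ℕ) : ℝ) := by push_cast; ring
    _ ≤ ((F0 n).card : ℝ) := Nat.cast_le.mpr hF0
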